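/- Let f : [−1,1] → ℝ be smooth (C²) with f(±1) = 0, f(0) = 1, f'(0) = 0, f''(0) < 0, 0 ≤ f(x) < 1 for x ≠ 0, f' > 0 on [−1,0) and f' < 0 on (0,1]. Then the function g defined by g(x) = arcsin(f(x)) for x ∈ [−1,0), g(0) = π/2, g(x) = π − arcsin(f(x)) for x ∈ (0,1], is differentiable at 0 with g'(0) = √(−f''(0)). -/

import Mathlib

open Real Filter Set Topology

/-- Appendix lemma: if `f` is `C²` with `f(±1) = 0`, `f(0) = 1`, `f'(0) = 0`,
`f''(0) < 0`, `0 ≤ f < 1` away from `0`, `f' > 0` on `[−1,0)` and `f' < 0` on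
`(0,1]`, then the piecewise function `g` (equal to `arcsin ∘ f` on `[−1,0)`,
to `π/2` at `0`, and to `π − arcsin ∘ f` on `(0,1]`) is differentiable at `0`
with `g'(0) = √(−f''(0))`. -/
theorem piecewise_arcsin_smooth (f : ℝ → ℝ) (hf : ContDiff ℝ 2 f)
    (hm1 : f (-1) = 0) (h1 : f 1 = 0) (h0 : f 0 = 1)
    (hd0 : deriv f 0 = 0) (hdd0 : deriv (deriv f) 0 < 0)
    (hrange : ∀ x ∈ Set.Icc (-1 : ℝ) 1, x ≠ 0 → 0 ≤ f x ∧ f x < 1)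
    (hpos : ∀ x ∈ Set.Ico (-1 : ℝ) 0, 0 < deriv f x)
    (hneg : ∀ x ∈ Set.Ioc (0 : ℝ) 1, deriv f x < 0)
    (g : ℝ → ℝ)
    (hg : ∀ x, g x = if x < 0 then Real.arcsin (f x)
      else if x = 0 then Real.pi / 2 else Real.pi - Real.arcsin (f x)) :
    HasDerivAt g (Real.sqrt (-(deriv (deriv f) 0))) 0 := by
  set c := deriv (deriv f) 0 with hcdef
  have hcneg : c < 0 := hdd0
  have hfd : Differentiable ℝ f := hf.differentiable (by norm_num)
  have hfc1 : ContDiff ℝ 1 (deriv f) := by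
    have h2 : (2 : WithTop ℕ∞) = 1 + 1 := by norm_num
    rw [h2, contDiff_succ_iff_deriv] at hf
    exact hf.2.2
  -- slope of `deriv f` at 0 tends to c
  have hslope2 : Tendsto (fun x => deriv f x / x) (𝓝[≠] (0:ℝ)) (𝓝 c) := by
    have hda : HasDerivAt (deriv f) c 0 :=
      ((hfc1.differentiable (by norm_num)) 0).hasDerivAt
    refine (hasDerivAt_iff_tendsto_slope.mp hda).congr (fun x => ?_)
    rw [slope_def_field, hd0]
    simp
  -- L'Hôpital : (1 - f x) / x ^ 2 → -(c/2)
  have hlh : Tendsto (fun x => (1 - f x) / x ^ 2) (𝓝[≠] (0:ℝ)) (𝓝 (-(c / 2))) := by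
    apply HasDerivAt.lhopital_zero_nhdsNE (f' := fun x => -deriv f x) (g' := fun x => 2 * x)
    · filter_upwards with x
      simpa using ((hfd x).hasDerivAt.const_sub 1)
    · filter_upwards with x
      simpa [mul_comm] using (hasDerivAt_pow 2 x)
    · filter_upwards [self_mem_nhdsWithin] with x hx
      simp only [mem_compl_iff, mem_singleton_iff] at hx
      positivity
    · have hcontn : Tendsto f (𝓝 (0:ℝ)) (𝓝 1) := by
        simpa [h0] using (hfd.continuous.tendsto 0)
      have h' : Tendsto (fun x => 1 - f x) (𝓝 (0:ℝ)) (𝓝 (1 - 1)) :=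
        tendsto_const_nhds.sub hcontn
      rw [sub_self] at h'
      exact h'.mono_left nhdsWithin_le_nhds
    · have : Tendsto (fun x : ℝ => x ^ 2) (𝓝 (0:ℝ)) (𝓝 0) := by
        simpa using (continuous_pow 2).tendsto (0:ℝ)
      exact this.mono_left nhdsWithin_le_nhds
    · have h2 : Tendsto (fun x => -(1/2) * (deriv f x / x)) (𝓝[≠] (0:ℝ))
          (𝓝 (-(1/2) * c)) := hslope2.const_mul _
      have hval : -(1/2) * c = -(c/2) := by ring
      rw [hval] at h2
      refine h2.congr' ?_
      filter_upwards [self_mem_nhdsWithin] with x hx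
      simp only [mem_compl_iff, mem_singleton_iff] at hx
      field_simp
  -- hence (1 - (f x)^2) / x^2 → -c
  have hcont : Tendsto f (𝓝[≠] (0:ℝ)) (𝓝 1) := by
    have := hfd.continuous.tendsto 0
    rw [h0] at this
    exact this.mono_left nhdsWithin_le_nhds
  have hlh2 : Tendsto (fun x => (1 - (f x) ^ 2) / x ^ 2) (𝓝[≠] (0:ℝ)) (𝓝 (-c)) := by
    have hmul := hlh.mul (hcont.const_add 1)
    have hval : -(c/2) * (1 + 1) = -c := by ring
    rw [hval] at hmul
    have heq : ∀ x : ℝ, (1 - f x) / x ^ 2 * (1 + f x) = (1 - (f x) ^ 2) / x ^ 2 := by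
      intro x; ring
    exact hmul.congr heq
  -- sqrt of that → sqrt (-c)
  have hsq : Tendsto (fun x => Real.sqrt ((1 - (f x) ^ 2) / x ^ 2)) (𝓝[≠] (0:ℝ))
      (𝓝 (Real.sqrt (-c))) :=
    (Real.continuous_sqrt.tendsto _).comp hlh2
  -- eventually, x ∈ Ioo (-1) 1 and x ≠ 0
  have hev : ∀ᶠ x in 𝓝[≠] (0:ℝ), (0 ≤ f x ∧ f x < 1) ∧ x ≠ 0 := by
    have hIoo : Ioo (-1 : ℝ) 1 ∈ 𝓝 (0:ℝ) := Ioo_mem_nhds (by norm_num) (by norm_num)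
    filter_upwards [nhdsWithin_le_nhds hIoo, self_mem_nhdsWithin] with x hx hx'
    simp only [mem_compl_iff, mem_singleton_iff] at hx'
    exact ⟨hrange x ⟨hx.1.le, hx.2.le⟩ hx', hx'⟩
  -- arccos (f x) → 0 within punctured nhds, staying nonzero
  have harc : Tendsto (fun x => Real.arccos (f x)) (𝓝[≠] (0:ℝ)) (𝓝[≠] (0:ℝ)) := by
    apply tendsto_nhdsWithin_of_tendsto_nhds_of_eventually_within
    · have := (Real.continuous_arccos.tendsto 1).comp hcont
      simpa [Real.arccos_one, Function.comp_def] using this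
    · filter_upwards [hev] with x hx
      have : 0 < Real.arccos (f x) := Real.arccos_pos.mpr hx.1.2
      simp only [mem_compl_iff, mem_singleton_iff]
      exact ne_of_gt this
  -- sin θ / θ → 1, so θ / sin θ → 1 along arccos (f x)
  have hsinlim : Tendsto (fun θ : ℝ => Real.sin θ / θ) (𝓝[≠] (0:ℝ)) (𝓝 1) := by
    have hds : HasDerivAt Real.sin 1 0 := by simpa using Real.hasDerivAt_sin 0
    refine (hasDerivAt_iff_tendsto_slope.mp hds).congr (fun θ => ?_)
    rw [slope_def_field, Real.sin_zero]
    simp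
  have hratio : Tendsto (fun x => Real.arccos (f x) / Real.sin (Real.arccos (f x)))
      (𝓝[≠] (0:ℝ)) (𝓝 1) := by
    have := ((hsinlim.comp harc).inv₀ one_ne_zero)
    simpa [Function.comp, one_div] using this
  -- the product limit
  have hprod : Tendsto (fun x => Real.arccos (f x) / Real.sin (Real.arccos (f x)) *
      Real.sqrt ((1 - (f x) ^ 2) / x ^ 2)) (𝓝[≠] (0:ℝ)) (𝓝 (Real.sqrt (-c))) := by
    have := hratio.mul hsq
    simpa using this
  -- conclude via slope characterization
  rw [hasDerivAt_iff_tendsto_slope]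
  refine hprod.congr' ?_
  filter_upwards [hev] with x hx
  obtain ⟨⟨hf0, hf1⟩, hxne⟩ := hx
  have hfsq : (f x) ^ 2 < 1 := by nlinarith
  have hs_pos : 0 < Real.sqrt (1 - (f x) ^ 2) := Real.sqrt_pos.mpr (by linarith)
  have hsin : Real.sin (Real.arccos (f x)) = Real.sqrt (1 - (f x) ^ 2) :=
    Real.sin_arccos _
  have habs : Real.sqrt ((1 - (f x) ^ 2) / x ^ 2)
      = Real.sqrt (1 - (f x) ^ 2) / |x| := by
    rw [Real.sqrt_div (by linarith), Real.sqrt_sq_eq_abs]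
  have key : Real.arccos (f x) / Real.sin (Real.arccos (f x)) *
      Real.sqrt ((1 - (f x) ^ 2) / x ^ 2) = Real.arccos (f x) / |x| := by
    rw [hsin, habs]
    field_simp
  have hslope : slope g 0 x = Real.arccos (f x) / |x| := by
    rcases lt_or_gt_of_ne hxne with h | h
    · rw [slope_def_field, hg x, hg 0, if_pos h, if_neg (lt_irrefl (0:ℝ)), if_pos rfl,
        abs_of_neg h, Real.arccos, sub_zero]
      field_simp
      ring
    · rw [slope_def_field, hg x, hg 0, if_neg (not_lt.mpr h.le), if_neg (ne_of_gt h),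
        if_neg (lt_irrefl (0:ℝ)), if_pos rfl, abs_of_pos h, Real.arccos, sub_zero]
      field_simp
      ring
  rw [key, hslope]
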